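/- There is no 8-divisible multiset of points in PG(v-1,2) of cardinality 23 with all point multiplicities at most 7. Equivalently, every binary linear code of effective length 23 whose weights are all divisible by 8 has a column of multiplicity at least 8 in any generator matrix. -/

import Mathlib

open scoped Classical

noncomputable def MVal {F V : Type*} [Field F] [AddCommGroup V] [Module F V]
    (M : Projectivization F V → ℕ) (K : Submodule F V) : ℕ :=
  ∑ᶠ P ∈ {P : Projectivization F V | P.submodule ≤ K}, M P

def IsDivisible {F V : Type*} [Field F] [AddCommGroup V] [Module F V] (Δ : ℕ)
    (M : Projectivization F V → ℕ) : Prop :=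
  ∀ H : Submodule F V, Module.finrank F H + 1 = Module.finrank F V →
    MVal M H ≡ MVal M ⊤ [MOD Δ]

def IsSpanning {F V : Type*} [Field F] [AddCommGroup V] [Module F V]
    (M : Projectivization F V → ℕ) : Prop :=
  (⨆ P ∈ {P : Projectivization F V | 0 < M P}, P.submodule) = ⊤

def gaussNum (q k : ℕ) : ℕ := ∑ i ∈ Finset.range k, q ^ i

def IsProjBase {F V : Type*} [Field F] [AddCommGroup V] [Module F V]
    (n : ℕ) (B : Finset (Projectivization F V)) : Prop :=
  B.card = n ∧ ∀ T ⊆ B, T.card = n - 1 →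
    Module.finrank F ((⨆ P ∈ T, Projectivization.submodule P) : Submodule F V) = n - 1


namespace AuxSt14

open Finset

variable {v : ℕ}

def dot (a x : Fin v → ZMod 2) : ZMod 2 := ∑ i, a i * x i

lemma zmod2_cases : ∀ c : ZMod 2, c = 0 ∨ c = 1 := by decide

lemma zmod2_ne_zero {c : ZMod 2} (h : c ≠ 0) : c = 1 := by
  rcases zmod2_cases c with h0 | h1 <;> tauto

lemma dot_zero_left (x : Fin v → ZMod 2) : dot 0 x = 0 := by simp [dot]

lemma dot_zero_right (a : Fin v → ZMod 2) : dot a 0 = 0 := by simp [dot]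

lemma dot_add_left (a b x : Fin v → ZMod 2) : dot (a + b) x = dot a x + dot b x := by
  simp [dot, add_mul, Finset.sum_add_distrib]

lemma dot_smul_left (c : ZMod 2) (a x : Fin v → ZMod 2) : dot (c • a) x = c * dot a x := by
  simp [dot, Finset.mul_sum, mul_assoc]

lemma dot_single_left (i : Fin v) (x : Fin v → ZMod 2) :
    dot (Pi.single i 1) x = x i := by
  simp [dot, Pi.single_apply, ite_mul]

lemma dot_single_right (i : Fin v) (a : Fin v → ZMod 2) :
    dot a (Pi.single i 1) = a i := by
  simp [dot, Pi.single_apply, mul_ite]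

lemma add_self_eq_zero' (u : Fin v → ZMod 2) : u + u = 0 := by
  funext i; exact CharTwo.add_self_eq_zero _

lemma exists_dot_one_left {a : Fin v → ZMod 2} (ha : a ≠ 0) :
    ∃ x, dot a x = 1 := by
  obtain ⟨i, hi⟩ := Function.ne_iff.1 ha
  exact ⟨Pi.single i 1, by rw [dot_single_right]; exact zmod2_ne_zero hi⟩

lemma exists_dot_one {x : Fin v → ZMod 2} (hx : x ≠ 0) :
    ∃ a, dot a x = 1 := by
  obtain ⟨i, hi⟩ := Function.ne_iff.1 hx
  exact ⟨Pi.single i 1, by rw [dot_single_left]; exact zmod2_ne_zero hi⟩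

lemma exists_dot_10 {x y : Fin v → ZMod 2} (hx : x ≠ 0) (hy : y ≠ 0) (hxy : x ≠ y) :
    ∃ a, dot a x = 1 ∧ dot a y = 0 := by
  by_cases h : ∃ i, x i ≠ 0 ∧ y i = 0
  · obtain ⟨i, hxi, hyi⟩ := h
    exact ⟨Pi.single i 1, by rw [dot_single_left]; exact zmod2_ne_zero hxi,
      by rw [dot_single_left]; exact hyi⟩
  · push_neg at h
    obtain ⟨j, hj⟩ := Function.ne_iff.1 hxy
    have hxj : x j = 0 := by
      by_contra hxj
      have h1 := zmod2_ne_zero hxj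
      have h2 := zmod2_ne_zero (h j hxj)
      rw [h1, h2] at hj; exact hj rfl
    have hyj : y j = 1 := by
      apply zmod2_ne_zero; rw [hxj] at hj; exact fun hh => hj hh.symm
    obtain ⟨i, hxi⟩ := Function.ne_iff.1 hx
    have hxi1 : x i = 1 := zmod2_ne_zero (by simpa using hxi)
    have hyi1 : y i = 1 := zmod2_ne_zero (h i (by simpa using hxi))
    refine ⟨Pi.single i 1 + Pi.single j 1, ?_, ?_⟩
    · rw [dot_add_left, dot_single_left, dot_single_left, hxi1, hxj]; decide
    · rw [dot_add_left, dot_single_left, dot_single_left, hyi1, hyj]; decide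

lemma card_classes_eq {p q : (Fin v → ZMod 2) → Prop} [DecidablePred p] [DecidablePred q]
    (u : Fin v → ZMod 2) (h : ∀ a, p a ↔ q (a + u)) :
    (univ.filter p).card = (univ.filter q).card := by
  apply Finset.card_nbij' (i := fun a => a + u) (j := fun a => a + u)
  · intro a ha
    simp only [mem_coe, mem_filter, mem_univ, true_and] at ha ⊢
    exact (h a).1 ha
  · intro a ha
    simp only [mem_coe, mem_filter, mem_univ, true_and] at ha ⊢
    apply (h _).2
    rw [add_assoc, add_self_eq_zero', add_zero]; exact ha
  · intro a _; show a + u + u = a; rw [add_assoc, add_self_eq_zero', add_zero]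
  · intro a _; show a + u + u = a; rw [add_assoc, add_self_eq_zero', add_zero]

lemma vpos {x : Fin v → ZMod 2} (hx : x ≠ 0) : 1 ≤ v := by
  by_contra h
  push_neg at h
  interval_cases v
  · exact hx (funext fun i => i.elim0)

lemma card_univ_two_pow : (univ : Finset (Fin v → ZMod 2)).card = 2 ^ v := by
  simp [card_univ]

lemma card_dot_eq {x : Fin v → ZMod 2} (hx : x ≠ 0) (s : ZMod 2) :
    (univ.filter fun a => dot a x = s).card = 2 ^ (v - 1) := by
  obtain ⟨a1, ha1⟩ := exists_dot_one hx
  have key : ∀ c s t : ZMod 2, s ≠ t → (c = s ↔ c + 1 = t) := by decide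
  have hswap : ∀ s t : ZMod 2, s ≠ t →
      (univ.filter fun a => dot a x = s).card = (univ.filter fun a => dot a x = t).card := by
    intro s t hst
    apply card_classes_eq a1
    intro a
    rw [dot_add_left, ha1]
    exact key _ _ _ hst
  have hsplit : (univ.filter fun a => dot a x = 0).card
      + (univ.filter fun a => dot a x = 1).card = 2 ^ v := by
    rw [← card_univ_two_pow (v := v)]
    have : (univ.filter fun a => ¬ dot a x = 0) = (univ.filter fun a => dot a x = 1) := by
      apply filter_congr
      intro a _
      rcases zmod2_cases (dot a x) with h | h <;> simp [h]
    rw [← this]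
    exact card_filter_add_card_filter_not _
  have h01 := hswap 0 1 (by decide)
  have hv := vpos hx
  have hpow : 2 ^ v = 2 ^ (v - 1) * 2 := by
    rw [← pow_succ]; congr 1; omega
  have target0 : (univ.filter fun a => dot a x = 0).card = 2 ^ (v - 1) := by omega
  rcases zmod2_cases s with rfl | rfl
  · exact target0
  · omega

lemma two_le_v {x y : Fin v → ZMod 2} (hx : x ≠ 0) (hy : y ≠ 0) (hxy : x ≠ y) : 2 ≤ v := by
  by_contra h
  push_neg at h
  interval_cases v
  · exact hx (funext fun i => i.elim0)
  · apply hxy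
    funext i
    have hx' : x ≠ 0 := hx
    -- in dimension 1 the only nonzero vector has value 1 everywhere
    have h1 : ∀ z : Fin 1 → ZMod 2, z ≠ 0 → z i = 1 := by
      intro z hz
      obtain ⟨j, hj⟩ := Function.ne_iff.1 hz
      have hji : j = i := Subsingleton.elim _ _
      have hzj : z j ≠ 0 := by simpa using hj
      rcases zmod2_cases (z j) with h0 | h1
      · exact absurd h0 hzj
      · rw [← hji]; exact h1
    rw [h1 x hx, h1 y hy]

lemma card_dot_pair {x y : Fin v → ZMod 2} (hx : x ≠ 0) (hy : y ≠ 0) (hxy : x ≠ y)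
    (s t : ZMod 2) :
    (univ.filter fun a => dot a x = s ∧ dot a y = t).card = 2 ^ (v - 2) := by
  obtain ⟨a1, ha1x, ha1y⟩ := exists_dot_10 hx hy hxy
  obtain ⟨a2, ha2y, ha2x⟩ := exists_dot_10 hy hx (Ne.symm hxy)
  have key : ∀ c d s t s' t' : ZMod 2,
      ((c = s ∧ d = t) ↔ (c + (s + s') = s' ∧ d + (t + t') = t')) := by decide
  have hswap : ∀ s t s' t' : ZMod 2,
      (univ.filter fun a => dot a x = s ∧ dot a y = t).card
        = (univ.filter fun a => dot a x = s' ∧ dot a y = t').card := by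
    intro s t s' t'
    apply card_classes_eq ((s + s') • a1 + (t + t') • a2)
    intro a
    simp only [dot_add_left, dot_smul_left, ha1x, ha1y, ha2x, ha2y, mul_one, mul_zero,
      add_zero, zero_add]
    exact key _ _ _ _ _ _
  have hv2 := two_le_v hx hy hxy
  have hsplit : (univ.filter fun a => dot a x = s ∧ dot a y = 0).card
      + (univ.filter fun a => dot a x = s ∧ dot a y = 1).card = 2 ^ (v - 1) := by
    rw [← card_dot_eq hx s]
    have e0 : (univ.filter fun a => dot a x = s ∧ dot a y = 0)
        = (univ.filter fun a => dot a x = s).filter (fun a => dot a y = 0) := by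
      rw [filter_filter]
    have e1 : (univ.filter fun a => dot a x = s ∧ dot a y = 1)
        = (univ.filter fun a => dot a x = s).filter (fun a => ¬ dot a y = 0) := by
      rw [filter_filter]
      apply filter_congr
      intro a _
      rcases zmod2_cases (dot a y) with h | h <;> simp [h]
    rw [e0, e1]
    exact card_filter_add_card_filter_not _
  have heq := hswap s 0 s 1
  have hpow : 2 ^ (v - 1) = 2 ^ (v - 2) * 2 := by
    rw [← pow_succ]; congr 1; omega
  have target : (univ.filter fun a => dot a x = s ∧ dot a y = 0).card = 2 ^ (v - 2) := by
    omega
  rcases zmod2_cases t with rfl | rfl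
  · exact target
  · omega
lemma count_coeff (p : (Fin v → ZMod 2) → Prop) [DecidablePred p] (w : ℕ) :
    ∑ a : Fin v → ZMod 2, (if p a then w else 0) = (univ.filter p).card * w := by
  rw [← Finset.sum_filter, Finset.sum_const, smul_eq_mul]

lemma gen1 (g : (Fin v → ZMod 2) → ℕ) (hg : g 0 = 0) :
    ∑ a : Fin v → ZMod 2, ∑ x ∈ univ.filter (fun x => dot a x = 0), g x
      = 2 ^ (v - 1) * ∑ x : Fin v → ZMod 2, g x := by
  have step1 : ∀ a : Fin v → ZMod 2, ∑ x ∈ univ.filter (fun x => dot a x = 0), g x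
      = ∑ x : Fin v → ZMod 2, if dot a x = 0 then g x else 0 := fun a => Finset.sum_filter _ _
  rw [Finset.sum_congr rfl fun a _ => step1 a, Finset.sum_comm, Finset.mul_sum]
  apply Finset.sum_congr rfl
  intro x _
  rw [count_coeff]
  by_cases hx : x = 0
  · subst hx; rw [hg, mul_zero, mul_zero]
  · rw [card_dot_eq hx 0]

lemma gen1' (g : (Fin v → ZMod 2) → ℕ) (hg : g 0 = 0) {x0 : Fin v → ZMod 2} (hx0 : x0 ≠ 0) :
    ∑ a ∈ univ.filter (fun a => dot a x0 = 0), ∑ x ∈ univ.filter (fun x => dot a x = 0), g x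
      = 2 ^ (v - 1) * g x0 + 2 ^ (v - 2) * ∑ x ∈ univ.erase x0, g x := by
  have step1 : ∑ a ∈ univ.filter (fun a => dot a x0 = 0),
        ∑ x ∈ univ.filter (fun x => dot a x = 0), g x
      = ∑ a : Fin v → ZMod 2, ∑ x : Fin v → ZMod 2,
          (if dot a x0 = 0 ∧ dot a x = 0 then g x else 0) := by
    rw [Finset.sum_filter]
    apply Finset.sum_congr rfl
    intro a _
    rw [Finset.sum_filter]
    split_ifs with h
    · apply Finset.sum_congr rfl; intro x _; simp [h]
    · rw [eq_comm]
      apply Finset.sum_eq_zero; intro x _; simp [h]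
  rw [step1, Finset.sum_comm]
  have step2 : ∀ x : Fin v → ZMod 2,
      ∑ a : Fin v → ZMod 2, (if dot a x0 = 0 ∧ dot a x = 0 then g x else 0)
        = (univ.filter fun a => dot a x0 = 0 ∧ dot a x = 0).card * g x := fun x =>
    count_coeff _ _
  rw [Finset.sum_congr rfl fun x _ => step2 x]
  rw [← Finset.add_sum_erase _ _ (mem_univ x0)]
  congr 1
  · have : (univ.filter fun a => dot a x0 = 0 ∧ dot a x0 = 0)
        = (univ.filter fun a => dot a x0 = 0) := by
      apply filter_congr; intro a _; simp
    rw [this, card_dot_eq hx0 0]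
  · rw [Finset.mul_sum]
    apply Finset.sum_congr rfl
    intro x hx
    have hxx0 : x ≠ x0 := Finset.ne_of_mem_erase hx
    by_cases hx00 : x = 0
    · subst hx00; rw [hg, mul_zero, mul_zero]
    · rw [card_dot_pair hx0 hx00 (Ne.symm hxx0) 0 0]

lemma gen2 (g : (Fin v → ZMod 2) → ℕ) (hg : g 0 = 0) :
    ∑ a : Fin v → ZMod 2, (∑ x ∈ univ.filter (fun x => dot a x = 0), g x) ^ 2
      = 2 ^ (v - 1) * (∑ x : Fin v → ZMod 2, g x * g x)
        + 2 ^ (v - 2) * ∑ x : Fin v → ZMod 2, ∑ y ∈ univ.erase x, g x * g y := by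
  have step1 : ∀ a : Fin v → ZMod 2, (∑ x ∈ univ.filter (fun x => dot a x = 0), g x) ^ 2
      = ∑ x : Fin v → ZMod 2, ∑ y : Fin v → ZMod 2,
          (if dot a x = 0 ∧ dot a y = 0 then g x * g y else 0) := by
    intro a
    rw [pow_two, Finset.sum_mul_sum]
    rw [Finset.sum_filter]
    apply Finset.sum_congr rfl
    intro x _
    split_ifs with h
    · rw [Finset.sum_filter]
      apply Finset.sum_congr rfl; intro y _; simp [h]
    · rw [eq_comm]; apply Finset.sum_eq_zero; intro y _; simp [h]
  rw [Finset.sum_congr rfl fun a _ => step1 a, Finset.sum_comm]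
  have step2 : ∀ x : Fin v → ZMod 2,
      ∑ a : Fin v → ZMod 2, ∑ y : Fin v → ZMod 2,
          (if dot a x = 0 ∧ dot a y = 0 then g x * g y else 0)
        = ∑ y : Fin v → ZMod 2,
            (univ.filter fun a => dot a x = 0 ∧ dot a y = 0).card * (g x * g y) := by
    intro x
    rw [Finset.sum_comm]
    exact Finset.sum_congr rfl fun y _ => count_coeff _ _
  rw [Finset.sum_congr rfl fun x _ => step2 x]
  have step3 : ∀ x : Fin v → ZMod 2,
      ∑ y : Fin v → ZMod 2,
          (univ.filter fun a => dot a x = 0 ∧ dot a y = 0).card * (g x * g y)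
        = 2 ^ (v - 1) * (g x * g x) + 2 ^ (v - 2) * ∑ y ∈ univ.erase x, g x * g y := by
    intro x
    by_cases hx : x = 0
    · subst hx
      simp [hg]
    · rw [← Finset.add_sum_erase _ _ (mem_univ x)]
      congr 1
      · have : (univ.filter fun a => dot a x = 0 ∧ dot a x = 0)
            = (univ.filter fun a => dot a x = 0) := by
          apply filter_congr; intro a _; simp
        rw [this, card_dot_eq hx 0]
      · rw [Finset.mul_sum]
        apply Finset.sum_congr rfl
        intro y hy
        have hyx : y ≠ x := Finset.ne_of_mem_erase hy
        by_cases hy0 : y = 0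
        · subst hy0; rw [hg, mul_zero, mul_zero, mul_zero]
        · rw [card_dot_pair hx hy0 (Ne.symm hyx) 0 0]
  rw [Finset.sum_congr rfl fun x _ => step3 x, Finset.sum_add_distrib, ← Finset.mul_sum,
    ← Finset.mul_sum]
noncomputable def nsum (m : (Fin v → ZMod 2) → ℕ) (a : Fin v → ZMod 2) : ℕ :=
  ∑ x ∈ univ.filter (fun x => dot a x = 0), m x

lemma nsum_zero (m : (Fin v → ZMod 2) → ℕ) : nsum m 0 = ∑ x, m x := by
  unfold nsum
  rw [Finset.filter_true_of_mem]
  intro x _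
  exact dot_zero_left x

lemma nsum_le (m : (Fin v → ZMod 2) → ℕ) (a : Fin v → ZMod 2) : nsum m a ≤ ∑ x, m x :=
  Finset.sum_le_sum_of_subset (filter_subset _ _)

lemma key3 (m : (Fin v → ZMod 2) → ℕ) (a b : Fin v → ZMod 2) :
    nsum m a + nsum m b + nsum m (a + b)
      = (∑ x, m x) + 2 * ∑ x ∈ univ.filter (fun x => dot a x = 0 ∧ dot b x = 0), m x := by
  unfold nsum
  rw [Finset.sum_filter, Finset.sum_filter, Finset.sum_filter, Finset.sum_filter,
    Finset.mul_sum, ← Finset.sum_add_distrib, ← Finset.sum_add_distrib,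
    ← Finset.sum_add_distrib]
  apply Finset.sum_congr rfl
  intro x _
  rw [dot_add_left]
  have e11 : (1 : ZMod 2) + 1 = 0 := by decide
  have e01 : (0 : ZMod 2) + 1 ≠ 0 := by decide
  have e10 : (1 : ZMod 2) + 0 ≠ 0 := by decide
  have e1 : (1 : ZMod 2) ≠ 0 := by decide
  rcases zmod2_cases (dot a x) with h1 | h1 <;> rcases zmod2_cases (dot b x) with h2 | h2 <;>
    simp [h1, h2, e11, e01, e10, e1] <;> ring
lemma sq_expand (g : (Fin v → ZMod 2) → ℕ) :
    (∑ x : Fin v → ZMod 2, g x) * (∑ x : Fin v → ZMod 2, g x)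
      = (∑ x : Fin v → ZMod 2, g x * g x)
        + ∑ x : Fin v → ZMod 2, ∑ y ∈ univ.erase x, g x * g y := by
  rw [Finset.sum_mul_sum, ← Finset.sum_add_distrib]
  apply Finset.sum_congr rfl
  intro x _
  exact (Finset.add_sum_erase univ (fun y => g x * g y) (mem_univ x)).symm

lemma lemB (hv : 2 ≤ v) (m : (Fin v → ZMod 2) → ℕ) (hm0 : m 0 = 0)
    (htot : ∑ x, m x = 23)
    (hmod : ∀ a : Fin v → ZMod 2, a ≠ 0 → nsum m a % 8 = 7)
    {a0 : Fin v → ZMod 2} (ha0 : a0 ≠ 0) (h7 : nsum m a0 = 7) :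
    ∀ x, dot a0 x = 0 → m x ≤ 1 := by
  set g : (Fin v → ZMod 2) → ℕ := fun x => if dot a0 x = 0 then m x else 0 with hgdef
  have hg0 : g 0 = 0 := by simp [hgdef, hm0]
  have hgsum : ∑ x, g x = 7 := by
    rw [← h7]; unfold nsum; rw [Finset.sum_filter]
  -- identification of nsum g b with the filtered double condition sum
  have hn2 : ∀ b : Fin v → ZMod 2,
      nsum g b = ∑ x ∈ univ.filter (fun x => dot a0 x = 0 ∧ dot b x = 0), m x := by
    intro b
    unfold nsum
    rw [Finset.sum_filter, Finset.sum_filter]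
    apply Finset.sum_congr rfl
    intro x _
    by_cases h1 : dot a0 x = 0 <;> by_cases h2 : dot b x = 0 <;> simp [hgdef, h1, h2]
  have hg_le : ∀ b, nsum g b ≤ 7 := by
    intro b; rw [← hgsum]; exact nsum_le g b
  have hval : ∀ b : Fin v → ZMod 2, b ≠ 0 → b ≠ a0 → nsum g b = 3 ∨ nsum g b = 7 := by
    intro b hb hba
    have hab : a0 + b ≠ 0 := by
      intro h
      apply hba
      have h2 := congrArg (fun z => a0 + z) h
      simp only [← add_assoc, add_self_eq_zero', zero_add, add_zero] at h2
      exact h2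
    have hk := key3 m a0 b
    rw [← hn2 b] at hk
    have h1 := hmod b hb
    have h2 := hmod (a0 + b) hab
    have h3 := hg_le b
    rw [h7, htot] at hk
    omega
  have hval0 : nsum g 0 = 7 := by rw [nsum_zero, hgsum]
  have hvala0 : nsum g a0 = 7 := by
    rw [hn2 a0, ← h7]
    unfold nsum
    apply Finset.sum_congr
    · apply filter_congr; intro x _; simp
    · intros; rfl
  -- the vanishing quadratic sum
  have hzero : ∑ b : Fin v → ZMod 2,
      (((nsum g b : ℤ) - 3) * ((nsum g b : ℤ) - 7)) = 0 := by
    apply Finset.sum_eq_zero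
    intro b _
    by_cases hb0 : b = 0
    · subst hb0; rw [hval0]; norm_num
    by_cases hba : b = a0
    · subst hba; rw [hvala0]; norm_num
    rcases hval b hb0 hba with h | h <;> rw [h] <;> norm_num
  -- expand
  have hexp : (∑ b : Fin v → ZMod 2, ((nsum g b : ℤ))^2)
      - 10 * (∑ b : Fin v → ZMod 2, (nsum g b : ℤ)) + 21 * 2 ^ v = 0 := by
    have e : ∑ b : Fin v → ZMod 2, (((nsum g b : ℤ) - 3) * ((nsum g b : ℤ) - 7))
        = (∑ b : Fin v → ZMod 2, ((nsum g b : ℤ))^2)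
          - 10 * (∑ b : Fin v → ZMod 2, (nsum g b : ℤ)) + 21 * 2 ^ v := by
      rw [Finset.mul_sum, ← Finset.sum_sub_distrib]
      have e21 : (21 : ℤ) * 2 ^ v = ∑ _b : Fin v → ZMod 2, (21 : ℤ) := by
        rw [Finset.sum_const, card_univ_two_pow]; push_cast; ring
      rw [e21, ← Finset.sum_add_distrib]
      apply Finset.sum_congr rfl; intro b _; ring
    rw [← e, hzero]
  have hE1 : (∑ b : Fin v → ZMod 2, (nsum g b : ℤ)) = 2 ^ (v - 1) * 7 := by
    have := gen1 g hg0
    have : ∑ b : Fin v → ZMod 2, nsum g b = 2 ^ (v - 1) * 7 := by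
      unfold nsum; rw [this, hgsum]
    exact_mod_cast congrArg (Nat.cast : ℕ → ℤ) this
  set Sg : ℕ := ∑ x : Fin v → ZMod 2, g x * g x with hSgdef
  set Pg : ℕ := ∑ x : Fin v → ZMod 2, ∑ y ∈ univ.erase x, g x * g y with hPgdef
  have hE2 : (∑ b : Fin v → ZMod 2, ((nsum g b : ℤ))^2)
      = 2 ^ (v - 1) * (Sg : ℤ) + 2 ^ (v - 2) * (Pg : ℤ) := by
    have h := gen2 g hg0
    have h' : ∑ b : Fin v → ZMod 2, (nsum g b)^2 = 2 ^ (v - 1) * Sg + 2 ^ (v - 2) * Pg := h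
    calc (∑ b : Fin v → ZMod 2, ((nsum g b : ℤ))^2)
        = ((∑ b : Fin v → ZMod 2, (nsum g b)^2 : ℕ) : ℤ) := by push_cast; rfl
      _ = _ := by rw [h']; push_cast; ring
  have hE0 : (Sg : ℤ) + Pg = 49 := by
    have h := sq_expand g
    rw [hgsum, ← hSgdef, ← hPgdef] at h
    have h' : Sg + Pg = 49 := by omega
    exact_mod_cast congrArg (Nat.cast : ℕ → ℤ) h'
  -- powers
  have hp1 : (2 : ℤ) ^ (v - 1) = 2 * 2 ^ (v - 2) := by
    rw [← pow_succ']; congr 1; omega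
  have hp0 : (2 : ℤ) ^ v = 4 * 2 ^ (v - 2) := by
    conv_lhs => rw [show v = v - 2 + 2 by omega]
    rw [pow_add]; ring
  have hX : (1 : ℤ) ≤ 2 ^ (v - 2) := one_le_pow₀ (by norm_num)
  have hSg7 : (Sg : ℤ) = 7 := by
    have key : (2 : ℤ) ^ (v - 2) * ((Sg : ℤ) - 7) = 0 := by
      rw [hp1] at hE1 hE2
      rw [hp0] at hexp
      linear_combination hexp - hE2 + 10 * hE1 - 2 ^ (v - 2) * hE0
    rcases mul_eq_zero.1 key with h | h
    · linarith
    · linarith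
  have hSg7' : Sg = 7 := by exact_mod_cast hSg7
  -- conclude
  intro x hx
  by_contra hge
  push_neg at hge
  have hgx : 2 ≤ g x := by have : g x = m x := by simp [hgdef, hx]
                           omega
  have hx0 : x ≠ 0 := by intro h; rw [h, hg0] at hgx; omega
  have key1 : g x + 2 ≤ g x * g x := by nlinarith [hgx]
  have hmono : ∑ y ∈ univ.erase x, g y ≤ ∑ y ∈ univ.erase x, (g y * g y) := by
    apply Finset.sum_le_sum
    intro y _
    rcases Nat.eq_zero_or_pos (g y) with h | h
    · simp [h]
    · exact Nat.le_mul_of_pos_left _ h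
  have e1 : g x * g x + ∑ y ∈ univ.erase x, (g y * g y) = 7 := by
    rw [Finset.add_sum_erase _ (fun y => g y * g y) (mem_univ x)]
    exact hSg7'
  have e2 : g x + ∑ y ∈ univ.erase x, g y = 7 := by
    rw [Finset.add_sum_erase _ g (mem_univ x)]
    exact hgsum
  omega
lemma main_contra (m : (Fin v → ZMod 2) → ℕ) (hm0 : m 0 = 0)
    (htot : ∑ x, m x = 23) (hle : ∀ x, m x ≤ 7)
    (hmod : ∀ a : Fin v → ZMod 2, a ≠ 0 → nsum m a % 8 = 7) : False := by
  -- v is at least 3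
  have hv3 : 3 ≤ v := by
    have hsplit : m 0 + ∑ x ∈ univ.erase 0, m x = 23 := by
      rw [Finset.add_sum_erase _ m (mem_univ 0)]; exact htot
    have hbound : ∑ x ∈ univ.erase 0, m x ≤ 7 * (2 ^ v - 1) := by
      calc ∑ x ∈ univ.erase 0, m x
            ≤ ∑ _x ∈ (univ : Finset (Fin v → ZMod 2)).erase 0, 7 :=
            Finset.sum_le_sum fun x _ => hle x
        _ = ((univ : Finset (Fin v → ZMod 2)).erase 0).card * 7 := by
            rw [Finset.sum_const, smul_eq_mul]
        _ = (2 ^ v - 1) * 7 := by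
            rw [Finset.card_erase_of_mem (mem_univ 0), card_univ_two_pow]
        _ = 7 * (2 ^ v - 1) := by ring
    by_contra hc
    push_neg at hc
    interval_cases v <;> simp_all <;> omega
  have hnle : ∀ a, nsum m a ≤ 23 := fun a => htot ▸ nsum_le m a
  by_cases hex : ∃ x1, 2 ≤ m x1
  · -- Case 1 : some point of multiplicity at least 2
    obtain ⟨x1, hx1⟩ := hex
    have hx10 : x1 ≠ 0 := fun h => by rw [h, hm0] at hx1; omega
    have h15 : ∀ a : Fin v → ZMod 2, a ≠ 0 → dot a x1 = 0 → 15 ≤ nsum m a := by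
      intro a ha hax
      have h1 := hmod a ha
      have h2 := hnle a
      have h3 : nsum m a ≠ 7 := by
        intro h7
        have := lemB (by omega) m hm0 htot hmod ha h7 x1 hax
        omega
      omega
    -- upper bound for the sum over the hyperplanes through x1
    have hupb := gen1' m hm0 hx10
    have herase : ∑ x ∈ univ.erase x1, m x = 23 - m x1 := by
      have := Finset.add_sum_erase univ m (mem_univ x1)
      omega
    -- lower bound
    have hzero_mem : (0 : Fin v → ZMod 2) ∈ univ.filter (fun a => dot a x1 = 0) := by
      simp [dot_zero_left]
    have hlow : nsum m 0 + ∑ a ∈ (univ.filter (fun a => dot a x1 = 0)).erase 0, nsum m a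
        = ∑ a ∈ univ.filter (fun a => dot a x1 = 0), nsum m a :=
      Finset.add_sum_erase _ (nsum m) hzero_mem
    have hlow2 : ((univ.filter (fun a => dot a x1 = 0)).erase 0).card * 15
        ≤ ∑ a ∈ (univ.filter (fun a => dot a x1 = 0)).erase 0, nsum m a := by
      have h := Finset.card_nsmul_le_sum ((univ.filter (fun a => dot a x1 = 0)).erase 0)
          (nsum m) 15 ?_
      · simpa [smul_eq_mul] using h
      · intro a ha
        have ha0 : a ≠ 0 := Finset.ne_of_mem_erase ha
        have hax : dot a x1 = 0 := by
          have hmem := Finset.mem_of_mem_erase ha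
          simp only [mem_filter, mem_univ, true_and] at hmem
          exact hmem
        exact h15 a ha0 hax
    have hcard_erase : ((univ.filter (fun a => dot a x1 = 0)).erase 0).card
        = 2 ^ (v - 1) - 1 := by
      rw [Finset.card_erase_of_mem hzero_mem, card_dot_eq hx10 0]
    have hn0 : nsum m 0 = 23 := by rw [nsum_zero, htot]
    -- put everything together
    have hT : ∑ a ∈ univ.filter (fun a => dot a x1 = 0), nsum m a
        = 2 ^ (v - 1) * m x1 + 2 ^ (v - 2) * (23 - m x1) := by
      rw [← herase]; exact hupb
    have hp1 : (2:ℕ) ^ (v - 1) = 2 * 2 ^ (v - 2) := by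
      rw [← pow_succ']; congr 1; omega
    have hX2 : (2:ℕ) ≤ 2 ^ (v - 2) := by
      calc (2:ℕ) = 2 ^ 1 := rfl
      _ ≤ 2 ^ (v - 2) := Nat.pow_le_pow_right (by norm_num) (by omega)
    have hmx7 : m x1 ≤ 7 := hle x1
    -- products
    have hprod : 2 ^ (v - 2) * (m x1 + 23) ≤ 2 ^ (v - 2) * 30 :=
      Nat.mul_le_mul_left _ (by omega)
    have hTval : ∑ a ∈ univ.filter (fun a => dot a x1 = 0), nsum m a
        = 2 ^ (v - 2) * (m x1 + 23) := by
      rw [hT, hp1]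
      set t := 23 - m x1 with ht
      have h23 : m x1 + 23 = 2 * m x1 + t := by omega
      rw [h23]
      ring
    omega
  · -- Case 2 : all multiplicities at most 1
    push_neg at hex
    have hS : ∑ x : Fin v → ZMod 2, m x * m x = 23 := by
      rw [← htot]
      apply Finset.sum_congr rfl
      intro x _
      have := hex x
      interval_cases (m x) <;> norm_num
    have hP : ∑ x : Fin v → ZMod 2, ∑ y ∈ univ.erase x, m x * m y = 506 := by
      have := sq_expand m
      rw [htot, hS] at this
      omega
    have hE1 : ∑ a : Fin v → ZMod 2, nsum m a = 2 ^ (v - 1) * 23 := by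
      have := gen1 m hm0
      unfold nsum
      rw [this, htot]
    have hE2 : ∑ a : Fin v → ZMod 2, (nsum m a) ^ 2
        = 2 ^ (v - 1) * 23 + 2 ^ (v - 2) * 506 := by
      have := gen2 m hm0
      unfold nsum
      rw [this, hS, hP]
    -- integer valued quadratic sum
    have hterm : ∀ a : Fin v → ZMod 2, a ≠ 0 →
        (0:ℤ) ≤ ((nsum m a : ℤ) - 7) * ((nsum m a : ℤ) - 15) := by
      intro a ha
      have h1 := hmod a ha
      have h2 := hnle a
      have : nsum m a = 7 ∨ nsum m a = 15 ∨ nsum m a = 23 := by omega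
      rcases this with h | h | h <;> rw [h] <;> norm_num
    have hlow : (128:ℤ) ≤ ∑ a : Fin v → ZMod 2,
        ((nsum m a : ℤ) - 7) * ((nsum m a : ℤ) - 15) := by
      rw [← Finset.add_sum_erase _ _ (mem_univ (0 : Fin v → ZMod 2))]
      have h0 : ((nsum m (0 : Fin v → ZMod 2) : ℤ) - 7) * ((nsum m 0 : ℤ) - 15) = 128 := by
        rw [nsum_zero, htot]; norm_num
      have hrest : (0:ℤ) ≤ ∑ a ∈ univ.erase (0 : Fin v → ZMod 2),
          ((nsum m a : ℤ) - 7) * ((nsum m a : ℤ) - 15) := by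
        apply Finset.sum_nonneg
        intro a ha
        exact hterm a (Finset.ne_of_mem_erase ha)
      omega
    -- expand the quadratic sum
    have hexp : ∑ a : Fin v → ZMod 2, ((nsum m a : ℤ) - 7) * ((nsum m a : ℤ) - 15)
        = (∑ a : Fin v → ZMod 2, ((nsum m a : ℕ) : ℤ)^2)
          - 22 * (∑ a : Fin v → ZMod 2, ((nsum m a : ℕ) : ℤ)) + 105 * 2 ^ v := by
      rw [Finset.mul_sum, ← Finset.sum_sub_distrib]
      have e105 : (105 : ℤ) * 2 ^ v = ∑ _a : Fin v → ZMod 2, (105 : ℤ) := by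
        rw [Finset.sum_const, card_univ_two_pow]; push_cast; ring
      rw [e105, ← Finset.sum_add_distrib]
      apply Finset.sum_congr rfl
      intro a _
      ring
    have hc1 : (∑ a : Fin v → ZMod 2, ((nsum m a : ℕ) : ℤ)) = ((2:ℤ) ^ (v - 1)) * 23 := by
      rw [← Nat.cast_sum, hE1]; push_cast; ring
    have hc2 : (∑ a : Fin v → ZMod 2, ((nsum m a : ℕ) : ℤ)^2)
        = ((2:ℤ) ^ (v - 1)) * 23 + ((2:ℤ) ^ (v - 2)) * 506 := by
      have : (∑ a : Fin v → ZMod 2, ((nsum m a : ℕ) : ℤ)^2)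
          = ((∑ a : Fin v → ZMod 2, (nsum m a) ^ 2 : ℕ) : ℤ) := by push_cast; rfl
      rw [this, hE2]; push_cast; ring
    have hp1 : (2:ℤ) ^ (v - 1) = 2 * 2 ^ (v - 2) := by
      rw [← pow_succ']; congr 1; omega
    have hp0 : (2:ℤ) ^ v = 4 * 2 ^ (v - 2) := by
      conv_lhs => rw [show v = v - 2 + 2 by omega]
      rw [pow_add]; ring
    have hX : (1:ℤ) ≤ 2 ^ (v - 2) := one_le_pow₀ (by norm_num)
    rw [hexp, hc1, hc2, hp1, hp0] at hlow
    linarith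
/-- the dot-product functional as a linear map -/
noncomputable def phi (a : Fin v → ZMod 2) : (Fin v → ZMod 2) →ₗ[ZMod 2] ZMod 2 where
  toFun x := dot a x
  map_add' x y := by simp [dot, mul_add, Finset.sum_add_distrib]
  map_smul' c x := by
    simp only [dot, Pi.smul_apply, smul_eq_mul, RingHom.id_apply, Finset.mul_sum]
    apply Finset.sum_congr rfl
    intro i _
    ring

lemma phi_rank {a : Fin v → ZMod 2} (ha : a ≠ 0) :
    Module.finrank (ZMod 2) (LinearMap.ker (phi a)) + 1 = v := by
  have hsurj : LinearMap.range (phi a) = ⊤ := by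
    rw [LinearMap.range_eq_top]
    intro c
    obtain ⟨x1, hx1⟩ := exists_dot_one_left ha
    refine ⟨c • x1, ?_⟩
    rw [map_smul]
    show c • dot a x1 = c
    rw [hx1, smul_eq_mul, mul_one]
  have h := LinearMap.finrank_range_add_finrank_ker (phi a)
  rw [hsurj, finrank_top] at h
  have h1 : Module.finrank (ZMod 2) (ZMod 2) = 1 := Module.finrank_self _
  have h2 : Module.finrank (ZMod 2) (Fin v → ZMod 2) = v := by
    simp [Module.finrank_pi]
  omega


end AuxSt14

open AuxSt14 Finset in
theorem stmt_14 (v : ℕ) (M : Projectivization (ZMod 2) (Fin v → ZMod 2) → ℕ)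
    (hdiv : IsDivisible 8 M) (hcard : MVal M ⊤ = 23) (hγ : ∀ P, M P ≤ 7) : False := by
  classical
  set m : (Fin v → ZMod 2) → ℕ := fun x =>
    if h : x = 0 then 0 else M (Projectivization.mk (ZMod 2) x h) with hmdef
  have hm0 : m 0 = 0 := by simp [hmdef]
  have hmle : ∀ x, m x ≤ 7 := by
    intro x
    by_cases h : x = 0
    · simp [hmdef, h]
    · simp only [hmdef, dif_neg h]
      exact hγ _
  have hu1 : ∀ u : (ZMod 2)ˣ, (u : ZMod 2) = 1 := by decide
  have mkinj : ∀ (x y : Fin v → ZMod 2) (hx : x ≠ 0) (hy : y ≠ 0),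
      Projectivization.mk (ZMod 2) x hx = Projectivization.mk (ZMod 2) y hy → x = y := by
    intro x y hx hy h
    obtain ⟨u, hu'⟩ := (Projectivization.mk_eq_mk_iff _ _ _ hx hy).1 h
    rw [← hu', Units.smul_def, hu1 u, one_smul]
  have bridge : ∀ K : Submodule (ZMod 2) (Fin v → ZMod 2),
      MVal M K = ∑ x ∈ univ.filter (fun x => x ∈ K ∧ x ≠ 0), m x := by
    intro K
    rw [MVal]
    haveI : Finite (Projectivization (ZMod 2) (Fin v → ZMod 2)) := Quotient.finite _
    have hfin : {P : Projectivization (ZMod 2) (Fin v → ZMod 2) | P.submodule ≤ K}.Finite :=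
      Set.toFinite _
    rw [finsum_mem_eq_finite_toFinset_sum _ hfin]
    apply Finset.sum_bij (i := fun P _ => P.rep)
    · intro P hP
      simp only [Set.Finite.mem_toFinset, Set.mem_setOf_eq] at hP
      simp only [mem_filter, mem_univ, true_and]
      refine ⟨?_, P.rep_nonzero⟩
      rw [Projectivization.submodule_eq] at hP
      exact (Submodule.span_singleton_le_iff_mem _ _).1 hP
    · intro P hP Q hQ h
      rw [← Projectivization.mk_rep P, ← Projectivization.mk_rep Q]
      exact Projectivization.mk_eq_mk_iff' _ _ _ _ _ |>.2 ⟨1, by rw [h, one_smul]⟩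
    · intro x hx
      simp only [mem_filter, mem_univ, true_and] at hx
      obtain ⟨hxK, hx0⟩ := hx
      refine ⟨Projectivization.mk (ZMod 2) x hx0, ?_, ?_⟩
      · simp only [Set.Finite.mem_toFinset, Set.mem_setOf_eq]
        rw [Projectivization.submodule_mk]
        exact (Submodule.span_singleton_le_iff_mem _ _).2 hxK
      · apply mkinj _ _ (Projectivization.rep_nonzero _) hx0
        rw [Projectivization.mk_rep]
    · intro P hP
      rw [hmdef]
      simp only [dif_neg P.rep_nonzero]
      rw [Projectivization.mk_rep]
  have htot : ∑ x, m x = 23 := by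
    have h := bridge ⊤
    rw [hcard] at h
    have e : univ.filter (fun x : Fin v → ZMod 2 => x ∈ (⊤ : Submodule (ZMod 2) _) ∧ x ≠ 0)
        = univ.erase 0 := by
      ext x
      simp [Finset.mem_erase, and_comm]
    rw [e] at h
    have := Finset.add_sum_erase univ m (mem_univ (0 : Fin v → ZMod 2))
    omega
  have hmod : ∀ a : Fin v → ZMod 2, a ≠ 0 → nsum m a % 8 = 7 := by
    intro a ha
    have hdv := hdiv (LinearMap.ker (phi a)) (by rw [phi_rank ha]; simp [Module.finrank_pi])
    rw [hcard, bridge] at hdv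
    have e : ∑ x ∈ univ.filter (fun x => x ∈ LinearMap.ker (phi a) ∧ x ≠ 0), m x
        = nsum m a := by
      unfold nsum
      apply Finset.sum_subset
      · intro x hx
        simp only [mem_filter, mem_univ, true_and, LinearMap.mem_ker] at hx ⊢
        exact hx.1
      · intro x hx hnx
        simp only [mem_filter, mem_univ, true_and, LinearMap.mem_ker] at hx hnx
        have : x = 0 := by tauto
        rw [this, hm0]
    rw [e] at hdv
    have : nsum m a % 8 = 23 % 8 := hdv
    omega
  exact main_contra m hm0 htot hmle hmod
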